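/- The degenerate Lauricella series Φ_D converges absolutely on its natural domain: for every α, β_2, …, β_N ∈ ℂ, every γ ∈ ℂ that is not a nonpositive integer, every t_1 ∈ ℂ, and all t_2, …, t_N ∈ ℂ with |t_j| < 1 for j = 2, …, N, the multiple series Φ_D(α, β_2, …, β_N, γ; t) = Σ_{m ∈ (ℤ_{≥0})^N} [(α)_{|m|} (β_2)_{m_2} ⋯ (β_N)_{m_N} / ((γ)_{|m|} (1)_{m_1} ⋯ (1)_{m_N})] · t_1^{m_1} ⋯ t_N^{m_N} converges absolutely. -/

import Mathlib

open Finset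

private lemma telescope' (n : ℕ) :
    ∏ j ∈ range n, (1 + 1/((j:ℝ)+1)) = (n:ℝ)+1 := by
  induction n with
  | zero => simp
  | succ n ih =>
    rw [prod_range_succ, ih]
    have h : ((n:ℝ)+1) ≠ 0 := by positivity
    field_simp
    push_cast
    ring

private lemma prod_one_add_le' (c : ℝ) (hc : 0 ≤ c) (n : ℕ) :
    ∏ j ∈ range n, (1 + c/((j:ℝ)+1)) ≤ ((n:ℝ)+1)^(⌈c⌉₊) := by
  calc ∏ j ∈ range n, (1 + c/((j:ℝ)+1))
      ≤ ∏ j ∈ range n, (1 + 1/((j:ℝ)+1))^(⌈c⌉₊) := by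
        refine Finset.prod_le_prod (fun j _ => by positivity) (fun j _ => ?_)
        have h1 : (0:ℝ) < (j:ℝ)+1 := by positivity
        have hd : (0:ℝ) ≤ 1/((j:ℝ)+1) := by positivity
        have h2 : 1 + (⌈c⌉₊:ℝ) * (1/((j:ℝ)+1)) ≤ (1 + 1/((j:ℝ)+1))^(⌈c⌉₊) :=
          one_add_mul_le_pow (by linarith : (-2:ℝ) ≤ 1/((j:ℝ)+1)) _
        have h3 : c/((j:ℝ)+1) ≤ (⌈c⌉₊:ℝ)/((j:ℝ)+1) := by
          gcongr
          exact Nat.le_ceil c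
        rw [mul_one_div] at h2
        linarith
    _ = (((n:ℝ)+1))^(⌈c⌉₊) := by rw [Finset.prod_pow, telescope']

private lemma poch_prod' (x : ℂ) (n : ℕ) :
    (ascPochhammer ℂ n).eval x = ∏ j ∈ range n, (x + j) := by
  induction n with
  | zero => simp
  | succ n ih => rw [ascPochhammer_succ_eval, ih, prod_range_succ]

private lemma fact_prod' (n : ℕ) : ∏ j ∈ range n, ((j:ℝ)+1) = n.factorial := by
  induction n with
  | zero => simp
  | succ n ih => rw [prod_range_succ, ih, Nat.factorial_succ]; push_cast; ring

private lemma poch_norm_le' (b : ℂ) (k : ℕ) :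
    ‖(ascPochhammer ℂ k).eval b‖ ≤ (k.factorial : ℝ) * ((k:ℝ)+1)^(⌈‖b‖⌉₊) := by
  rw [poch_prod', norm_prod]
  calc ∏ j ∈ range k, ‖b + (j:ℂ)‖
      ≤ ∏ j ∈ range k, (((j:ℝ)+1) * (1 + ‖b‖/((j:ℝ)+1))) := by
        refine Finset.prod_le_prod (fun j _ => norm_nonneg _) (fun j _ => ?_)
        have h1 : (0:ℝ) < (j:ℝ)+1 := by positivity
        have h2 : ‖b + (j:ℂ)‖ ≤ ‖b‖ + (j:ℝ) := by
          calc ‖b + (j:ℂ)‖ ≤ ‖b‖ + ‖(j:ℂ)‖ := norm_add_le _ _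
          _ = ‖b‖ + (j:ℝ) := by rw [Complex.norm_natCast]
        have : ((j:ℝ)+1) * (1 + ‖b‖/((j:ℝ)+1)) = (j:ℝ) + 1 + ‖b‖ := by field_simp
        rw [this]; linarith
    _ = (∏ j ∈ range k, ((j:ℝ)+1)) * ∏ j ∈ range k, (1 + ‖b‖/((j:ℝ)+1)) :=
        Finset.prod_mul_distrib
    _ ≤ (k.factorial : ℝ) * ((k:ℝ)+1)^(⌈‖b‖⌉₊) := by
        rw [fact_prod']
        exact mul_le_mul_of_nonneg_left (prod_one_add_le' _ (norm_nonneg b) k)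
          (by positivity)

private lemma sum_add_one_le_prod' {ι : Type*} (s : Finset ι) (m : ι → ℕ) :
    (∑ i ∈ s, m i) + 1 ≤ ∏ i ∈ s, (m i + 1) := by
  classical
  induction s using Finset.cons_induction with
  | empty => simp
  | cons a s ha ih =>
    rw [sum_cons, prod_cons]
    have h1 : 1 ≤ ∏ i ∈ s, (m i + 1) :=
      Finset.one_le_prod' (fun i _ => Nat.le_add_left 1 (m i))
    nlinarith

private lemma summable_poly_geom' (L : ℕ) {r : ℝ} (h0 : 0 ≤ r) (h1 : r < 1) :
    Summable (fun k : ℕ => ((k:ℝ)+1)^L * r^k) := by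
  have key : (fun k : ℕ => ((k:ℝ)+1)^L * r^k)
      = fun k : ℕ => ∑ j ∈ range (L+1), ((L.choose j : ℝ)) * ((k:ℝ)^j * r^k) := by
    funext k
    rw [add_pow, Finset.sum_mul]
    refine Finset.sum_congr rfl (fun j _ => ?_)
    simp only [one_pow, mul_one]
    ring
  rw [key]
  refine summable_sum (fun j _ => Summable.mul_left _ ?_)
  exact summable_pow_mul_geometric_of_norm_lt_one j
    (by rwa [Real.norm_eq_abs, abs_of_nonneg h0])

private lemma summable_poly_fact' (L : ℕ) {r : ℝ} (h0 : 0 ≤ r) :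
    Summable (fun k : ℕ => ((k:ℝ)+1)^L * r^k / (k.factorial : ℝ)) := by
  refine Summable.of_nonneg_of_le (fun k => by positivity) (fun k => ?_)
    (Real.summable_pow_div_factorial ((2:ℝ)^L * r))
  have hk : ((k:ℝ)+1) ≤ (2:ℝ)^k := by
    exact_mod_cast Nat.succ_le_of_lt (Nat.lt_two_pow_self (n := k))
  calc ((k:ℝ)+1)^L * r^k / (k.factorial : ℝ)
      ≤ ((2:ℝ)^k)^L * r^k / (k.factorial : ℝ) := by gcongr
    _ = ((2:ℝ)^L * r)^k / (k.factorial : ℝ) := by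
        rw [← pow_mul, mul_comm k L, pow_mul, mul_pow]

private lemma summable_pi_prod' {N : ℕ} (f : Fin N → ℕ → ℝ) (h0 : ∀ i k, 0 ≤ f i k)
    (hf : ∀ i, Summable (f i)) : Summable (fun m : Fin N → ℕ => ∏ i, f i (m i)) := by
  classical
  refine summable_of_sum_le (c := ∏ i, ∑' k, f i k)
    (fun m => Finset.prod_nonneg (fun i _ => h0 i (m i))) (fun u => ?_)
  have hsub : u ⊆ Fintype.piFinset (fun i => Finset.range (u.sup (fun m => m i) + 1)) := by
    intro m hm
    rw [Fintype.mem_piFinset]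
    exact fun i => mem_range.mpr (Nat.lt_succ_of_le (Finset.le_sup (f := fun m => m i) hm))
  calc ∑ m ∈ u, ∏ i, f i (m i)
      ≤ ∑ m ∈ Fintype.piFinset (fun i => Finset.range (u.sup (fun m => m i) + 1)),
          ∏ i, f i (m i) :=
        Finset.sum_le_sum_of_subset_of_nonneg hsub
          (fun m _ _ => Finset.prod_nonneg (fun i _ => h0 i (m i)))
    _ = ∏ i, ∑ k ∈ Finset.range (u.sup (fun m => m i) + 1), f i k :=
        (Finset.prod_univ_sum _ _).symm
    _ ≤ ∏ i, ∑' k, f i k := by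
        refine Finset.prod_le_prod (fun i _ => Finset.sum_nonneg (fun k _ => h0 i k))
          (fun i _ => Summable.sum_le_tsum _ (fun k _ => h0 i k) (hf i))




/-- The general term of the degenerate Lauricella series `Φ_D`.
For a multi-index `m : Fin N → ℕ` (coordinate `i` representing the classical index `i+1`),
the term is
`(α)_{|m|} (β_2)_{m_2} ⋯ (β_N)_{m_N} / ((γ)_{|m|} (1)_{m_1} ⋯ (1)_{m_N}) · t^m`,
where `(x)_k` is the Pochhammer symbol and `(1)_{m_i} = m_i!`.
The entry `β 0` (i.e. "β_1") does not occur. -/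
noncomputable def phiDTerm {N : ℕ} (hN : 0 < N) (α γ : ℂ) (β : Fin N → ℂ)
    (t : Fin N → ℂ) (m : Fin N → ℕ) : ℂ :=
  ((ascPochhammer ℂ (∑ i, m i)).eval α *
      ∏ i ∈ Finset.univ.erase (⟨0, hN⟩ : Fin N), (ascPochhammer ℂ (m i)).eval (β i)) /
    ((ascPochhammer ℂ (∑ i, m i)).eval γ * ∏ i, (Nat.factorial (m i) : ℂ)) *
    ∏ i, t i ^ m i

set_option maxHeartbeats 1000000 in
/-- **Absolute convergence of `Φ_D` on its natural domain**: for every `α, β_2, …, β_N ∈ ℂ`,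
every `γ ∈ ℂ` which is not a nonpositive integer, every `t_1 ∈ ℂ` and all `t_2, …, t_N ∈ ℂ`
of modulus `< 1`, the multiple series `Φ_D(α, β_2, …, β_N, γ; t)` converges absolutely. -/
theorem phiD_abs_convergence (N : ℕ) (hN : 0 < N) (α γ : ℂ) (β : Fin N → ℂ)
    (hγ : ∀ k : ℕ, γ ≠ -(k : ℂ)) (t : Fin N → ℂ)
    (ht : ∀ i : Fin N, i ≠ ⟨0, hN⟩ → ‖t i‖ < 1) :
    Summable (fun m : Fin N → ℕ => ‖phiDTerm hN α γ β t m‖) := by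
  classical
  set z : Fin N := ⟨0, hN⟩ with hzdef
  -- γ + j never vanishes
  have hγj : ∀ j : ℕ, γ + (j:ℂ) ≠ 0 := by
    intro j h
    exact hγ j (by linear_combination h)
  have hγpos : ∀ j : ℕ, 0 < ‖γ + (j:ℂ)‖ := fun j => norm_pos_iff.mpr (hγj j)
  -- a uniform bound  (j+1) ≤ S * ‖γ + j‖
  set J0 : ℕ := ⌈2*‖γ‖⌉₊ + 1 with hJ0def
  set S : ℝ := 4 + ∑ j ∈ range J0, ((j:ℝ)+1)/‖γ + (j:ℂ)‖ with hSdef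
  have hsumnn : 0 ≤ ∑ j ∈ range J0, ((j:ℝ)+1)/‖γ + (j:ℂ)‖ :=
    Finset.sum_nonneg (fun j _ => by positivity)
  have hS4 : (4:ℝ) ≤ S := by rw [hSdef]; linarith
  have hkey : ∀ j : ℕ, ((j:ℝ)+1) ≤ S * ‖γ + (j:ℂ)‖ := by
    intro j
    by_cases hj : j < J0
    · have h1 : ((j:ℝ)+1)/‖γ + (j:ℂ)‖ ≤ S := by
        have h2 := Finset.single_le_sum (f := fun j : ℕ => ((j:ℝ)+1)/‖γ + (j:ℂ)‖)
          (fun i _ => by positivity) (mem_range.mpr hj)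
        rw [hSdef]; linarith
      rw [div_le_iff₀ (hγpos j)] at h1
      linarith [h1]
    · push_neg at hj
      have hj2 : 2*‖γ‖ + 1 ≤ (j:ℝ) := by
        have h3 : (J0:ℝ) ≤ (j:ℝ) := Nat.cast_le.mpr hj
        have h4 := Nat.le_ceil (2*‖γ‖)
        rw [hJ0def] at h3
        push_cast at h3
        linarith
      have hnorm : ((j:ℝ)+1)/2 ≤ ‖γ + (j:ℂ)‖ := by
        have h5 : ‖(j:ℂ)‖ - ‖-γ‖ ≤ ‖(j:ℂ) - (-γ)‖ := norm_sub_norm_le _ _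
        rw [sub_neg_eq_add, norm_neg, Complex.norm_natCast, add_comm] at h5
        linarith
      nlinarith [hγpos j]
  -- ratio bound constants
  set c : ℝ := ‖α - γ‖ with hcdef
  have hc0 : (0:ℝ) ≤ c := norm_nonneg _
  have hcS : (0:ℝ) ≤ c * S := by nlinarith
  set K : ℕ := ⌈c*S⌉₊ with hKdef
  have hratio : ∀ n : ℕ,
      ‖(ascPochhammer ℂ n).eval α‖ ≤ ((n:ℝ)+1)^K * ‖(ascPochhammer ℂ n).eval γ‖ := by
    intro n
    rw [poch_prod', poch_prod', norm_prod, norm_prod]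
    calc ∏ j ∈ range n, ‖α + (j:ℂ)‖
        ≤ ∏ j ∈ range n, (‖γ + (j:ℂ)‖ * (1 + c*S/((j:ℝ)+1))) := by
          refine Finset.prod_le_prod (fun j _ => norm_nonneg _) (fun j _ => ?_)
          have h1 : (0:ℝ) < (j:ℝ)+1 := by positivity
          have h2 : ‖α + (j:ℂ)‖ ≤ ‖γ + (j:ℂ)‖ + c := by
            calc ‖α + (j:ℂ)‖ = ‖(γ + (j:ℂ)) + (α - γ)‖ := by ring_nf
              _ ≤ ‖γ + (j:ℂ)‖ + ‖α - γ‖ := norm_add_le _ _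
          have h3 : c ≤ ‖γ + (j:ℂ)‖ * (c*S) / ((j:ℝ)+1) := by
            rw [le_div_iff₀ h1]
            nlinarith [hkey j]
          have h4 : ‖γ + (j:ℂ)‖ * (1 + c*S/((j:ℝ)+1))
              = ‖γ + (j:ℂ)‖ + ‖γ + (j:ℂ)‖ * (c*S) / ((j:ℝ)+1) := by ring
          rw [h4]; linarith
      _ = (∏ j ∈ range n, ‖γ + (j:ℂ)‖) * ∏ j ∈ range n, (1 + c*S/((j:ℝ)+1)) :=
          Finset.prod_mul_distrib
      _ ≤ (∏ j ∈ range n, ‖γ + (j:ℂ)‖) * ((n:ℝ)+1)^K := by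
          refine mul_le_mul_of_nonneg_left (prod_one_add_le' _ hcS n)
            (Finset.prod_nonneg (fun j _ => norm_nonneg _))
      _ = ((n:ℝ)+1)^K * ∏ j ∈ range n, ‖γ + (j:ℂ)‖ := mul_comm _ _
  have hGpos : ∀ n : ℕ, 0 < ‖(ascPochhammer ℂ n).eval γ‖ := by
    intro n
    rw [poch_prod', norm_prod]
    exact Finset.prod_pos (fun j _ => hγpos j)
  -- the comparison family
  set B : Fin N → ℕ := fun i => ⌈‖β i‖⌉₊ with hBdef
  set f : Fin N → ℕ → ℝ := fun i k =>
    ((k:ℝ)+1)^(K + B i) * ‖t i‖^k / (if i = z then ((k.factorial : ℕ) : ℝ) else 1)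
    with hfdef
  have hf0 : ∀ i k, 0 ≤ f i k := by
    intro i k
    rw [hfdef]
    dsimp only
    split <;> positivity
  have hfsum : ∀ i, Summable (f i) := by
    intro i
    by_cases hi : i = z
    · have : f i = fun k : ℕ => ((k:ℝ)+1)^(K + B i) * ‖t i‖^k / (k.factorial : ℝ) := by
        funext k; rw [hfdef]; simp [hi]
      rw [this]
      exact summable_poly_fact' _ (norm_nonneg _)
    · have : f i = fun k : ℕ => ((k:ℝ)+1)^(K + B i) * ‖t i‖^k := by
        funext k; rw [hfdef]; simp [hi]
      rw [this]
      exact summable_poly_geom' _ (norm_nonneg _) (ht i hi)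
  refine Summable.of_nonneg_of_le (fun m => norm_nonneg _) (fun m => ?_)
    (summable_pi_prod' f hf0 hfsum)
  -- notation for this multi-index
  set n : ℕ := ∑ i, m i with hndef
  set a : ℝ := ‖(ascPochhammer ℂ n).eval α‖ with hadef
  set g : ℝ := ‖(ascPochhammer ℂ n).eval γ‖ with hgdef
  set T : ℝ := ∏ i, ‖t i‖ ^ m i with hTdef
  set E : ℝ := ∏ i ∈ Finset.univ.erase z, ((m i).factorial : ℝ) with hEdef
  have hgpos : 0 < g := hGpos n
  have hEpos : 0 < E := Finset.prod_pos (fun i _ => by positivity)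
  have hτpos : (0:ℝ) < ((m z).factorial : ℝ) := by positivity
  -- norm of the term
  have hnorm : ‖phiDTerm hN α γ β t m‖ =
      (a * ∏ i ∈ Finset.univ.erase z, ‖(ascPochhammer ℂ (m i)).eval (β i)‖) /
        (g * ∏ i, ((m i).factorial : ℝ)) * T := by
    rw [phiDTerm, norm_mul, norm_div, norm_mul, norm_mul, norm_prod, norm_prod, norm_prod]
    simp only [Complex.norm_natCast, norm_pow]
    rfl
  -- value of the comparison term
  have hrhs : ∏ i, f i (m i) =
      ((∏ i, ((m i:ℝ)+1)^K) * ∏ i, ((m i:ℝ)+1)^(B i)) * T / ((m z).factorial : ℝ) := by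
    rw [hfdef]
    dsimp only
    rw [Finset.prod_div_distrib, Finset.prod_ite_eq' Finset.univ z
      (fun i => (((m i).factorial : ℕ) : ℝ)), if_pos (Finset.mem_univ z)]
    congr 1
    rw [← Finset.prod_mul_distrib]
    rw [hTdef, ← Finset.prod_mul_distrib]
    refine Finset.prod_congr rfl (fun i _ => ?_)
    rw [pow_add]
  rw [hnorm, hrhs]
  -- the factorial product splits off the z factor
  have hF : (∏ i, ((m i).factorial : ℝ)) = ((m z).factorial : ℝ) * E := by
    rw [hEdef]
    exact (Finset.mul_prod_erase Finset.univ _ (Finset.mem_univ z)).symm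
  rw [hF]
  -- rewrite LHS as product of three factors
  have hid : (a * ∏ i ∈ Finset.univ.erase z, ‖(ascPochhammer ℂ (m i)).eval (β i)‖) /
        (g * (((m z).factorial : ℝ) * E)) * T
      = (a / g) *
        (∏ i ∈ Finset.univ.erase z,
          (‖(ascPochhammer ℂ (m i)).eval (β i)‖ / ((m i).factorial : ℝ))) *
        (T / ((m z).factorial : ℝ)) := by
    have hg' : g ≠ 0 := ne_of_gt hgpos
    have hE' : E ≠ 0 := ne_of_gt hEpos
    have hτ' : ((m z).factorial : ℝ) ≠ 0 := ne_of_gt hτpos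
    rw [Finset.prod_div_distrib, ← hEdef]
    field_simp
  rw [hid]
  have hTnn : 0 ≤ T := Finset.prod_nonneg (fun i _ => by positivity)
  -- bound the first factor
  have hb1 : a / g ≤ ∏ i, ((m i:ℝ)+1)^K := by
    rw [div_le_iff₀ hgpos]
    refine le_trans (hratio n) (mul_le_mul_of_nonneg_right ?_ hgpos.le)
    have hnat : (n + 1 : ℕ) ≤ ∏ i, (m i + 1) := sum_add_one_le_prod' Finset.univ m
    have hcast : ((n:ℝ)+1) ≤ ∏ i, ((m i:ℝ)+1) := by
      have := (Nat.cast_le (α := ℝ)).mpr hnat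
      push_cast at this
      exact this
    calc ((n:ℝ)+1)^K ≤ (∏ i, ((m i:ℝ)+1))^K := by
          exact pow_le_pow_left₀ (by positivity) hcast K
      _ = ∏ i, ((m i:ℝ)+1)^K := by rw [Finset.prod_pow]
  -- bound the second factor
  have hb2 : (∏ i ∈ Finset.univ.erase z,
        (‖(ascPochhammer ℂ (m i)).eval (β i)‖ / ((m i).factorial : ℝ)))
      ≤ ∏ i, ((m i:ℝ)+1)^(B i) := by
    have step1 : (∏ i ∈ Finset.univ.erase z,
          (‖(ascPochhammer ℂ (m i)).eval (β i)‖ / ((m i).factorial : ℝ)))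
        ≤ ∏ i ∈ Finset.univ.erase z, ((m i:ℝ)+1)^(B i) := by
      refine Finset.prod_le_prod (fun i _ => by positivity) (fun i _ => ?_)
      rw [div_le_iff₀ (by positivity : (0:ℝ) < ((m i).factorial : ℝ))]
      rw [hBdef]
      calc ‖(ascPochhammer ℂ (m i)).eval (β i)‖
          ≤ ((m i).factorial : ℝ) * ((m i:ℝ)+1)^(⌈‖β i‖⌉₊) := poch_norm_le' _ _
        _ = ((m i:ℝ)+1)^(⌈‖β i‖⌉₊) * ((m i).factorial : ℝ) := mul_comm _ _
    refine le_trans step1 ?_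
    rw [← Finset.prod_erase_mul Finset.univ (fun i => ((m i:ℝ)+1)^(B i)) (Finset.mem_univ z)]
    have h1 : (1:ℝ) ≤ ((m z:ℝ)+1)^(B z) := one_le_pow₀ (by linarith [Nat.cast_nonneg (α := ℝ) (m z)])
    nlinarith [Finset.prod_nonneg (fun i (_ : i ∈ Finset.univ.erase z) =>
      (by positivity : (0:ℝ) ≤ ((m i:ℝ)+1)^(B i)))]
  -- combine
  have h2nn : 0 ≤ ∏ i ∈ Finset.univ.erase z,
      (‖(ascPochhammer ℂ (m i)).eval (β i)‖ / ((m i).factorial : ℝ)) :=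
    Finset.prod_nonneg (fun i _ => by positivity)
  have hdiv : (0:ℝ) ≤ T / ((m z).factorial : ℝ) := div_nonneg hTnn hτpos.le
  have hRnn : (0:ℝ) ≤ ∏ i, ((m i:ℝ)+1)^K := Finset.prod_nonneg (fun i _ => by positivity)
  rw [mul_div_assoc]
  exact mul_le_mul_of_nonneg_right (mul_le_mul hb1 hb2 h2nn hRnn) hdiv
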